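/- Let G be the graph on {0,1}^5 where distinct u, v are adjacent iff 1 ≤ d_H(u,v) ≤ 2, and let G ⊠ G denote the strong product of G with itself. Then the 20-element set consisting of the pairs ((1,1,0,0,0),(1,1,1,1,1)), ((1,0,1,0,0),(1,1,0,0,0)), ((0,1,1,0,0),(0,0,1,1,0)), ((1,1,1,0,0),(0,0,0,0,1)), ((1,0,0,1,0),(0,0,1,0,1)), ((0,1,0,1,0),(1,0,0,0,0)), ((1,1,0,1,0),(0,1,0,1,0)), ((0,0,1,1,0),(0,1,0,1,1)), ((1,0,1,1,0),(1,0,1,1,0)), ((0,1,1,1,0),(1,1,1,0,1)), ((1,0,0,0,1),(0,0,0,1,0)), ((0,1,0,0,1),(0,1,0,0,1)), ((1,1,0,0,1),(1,0,1,0,0)), ((0,0,1,0,1),(1,0,1,0,1)), ((1,0,1,0,1),(0,1,1,1,1)), ((0,1,1,0,1),(1,1,0,1,0)), ((0,0,0,1,1),(1,1,1,1,0)), ((1,0,0,1,1),(1,1,0,0,1)), ((0,1,0,1,1),(0,0,1,1,1)), ((0,0,1,1,1),(0,0,0,0,0)) is an independent set in G ⊠ G. -/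

import Mathlib

open SimpleGraph

def gilbert : SimpleGraph (Fin 5 → Bool) where
  Adj u v := 1 ≤ hammingDist u v ∧ hammingDist u v ≤ 2
  symm := ⟨fun u v h => ⟨hammingDist_comm v u ▸ h.1, hammingDist_comm v u ▸ h.2⟩⟩
  loopless := ⟨fun u h => by simpa [hammingDist_self] using h.1⟩

instance : DecidableRel gilbert.Adj :=
  fun u v => inferInstanceAs (Decidable (1 ≤ hammingDist u v ∧ hammingDist u v ≤ 2))
/-- A set of vertices is independent if no two of its elements are adjacent. -/
def IsIndep {V : Type*} (G : SimpleGraph V) (s : Set V) : Prop :=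
  s.Pairwise fun u v => ¬ G.Adj u v

/-- The independence number: the largest size of an independent set. -/
noncomputable def indepNum {V : Type*} [Fintype V] (G : SimpleGraph V) : ℕ :=
  sSup {n | ∃ s : Finset V, IsIndep G ↑s ∧ s.card = n}
/-- The strong product of two simple graphs. -/
def strongProd {V W : Type*} (G : SimpleGraph V) (H : SimpleGraph W) : SimpleGraph (V × W) where
  Adj a b := a ≠ b ∧ (a.1 = b.1 ∨ G.Adj a.1 b.1) ∧ (a.2 = b.2 ∨ H.Adj a.2 b.2)
  symm := ⟨fun a b h => ⟨fun e => h.1 e.symm, (h.2.1).imp Eq.symm (fun hadj => G.adj_symm hadj),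
    (h.2.2).imp Eq.symm (fun hadj => H.adj_symm hadj)⟩⟩
  loopless := ⟨fun a h => h.1 rfl⟩

instance : DecidableRel (strongProd gilbert gilbert).Adj :=
  fun a b => inferInstanceAs (Decidable (a ≠ b ∧ (a.1 = b.1 ∨ gilbert.Adj a.1 b.1) ∧
    (a.2 = b.2 ∨ gilbert.Adj a.2 b.2)))

def indepList5 : List ((Fin 5 → Bool) × (Fin 5 → Bool)) :=
  [(![true, true, false, false, false], ![true, true, true, true, true]),
      (![true, false, true, false, false], ![true, true, false, false, false]),
      (![false, true, true, false, false], ![false, false, true, true, false]),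
      (![true, true, true, false, false], ![false, false, false, false, true]),
      (![true, false, false, true, false], ![false, false, true, false, true]),
      (![false, true, false, true, false], ![true, false, false, false, false]),
      (![true, true, false, true, false], ![false, true, false, true, false]),
      (![false, false, true, true, false], ![false, true, false, true, true]),
      (![true, false, true, true, false], ![true, false, true, true, false]),
      (![false, true, true, true, false], ![true, true, true, false, true]),
      (![true, false, false, false, true], ![false, false, false, true, false]),
      (![false, true, false, false, true], ![false, true, false, false, true]),
      (![true, true, false, false, true], ![true, false, true, false, false]),
      (![false, false, true, false, true], ![true, false, true, false, true]),
      (![true, false, true, false, true], ![false, true, true, true, true]),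
      (![false, true, true, false, true], ![true, true, false, true, false]),
      (![false, false, false, true, true], ![true, true, true, true, false]),
      (![true, false, false, true, true], ![true, true, false, false, true]),
      (![false, true, false, true, true], ![false, false, true, true, true]),
      (![false, false, true, true, true], ![false, false, false, false, false])]

set_option maxRecDepth 40000 in
lemma indepList5_pairwise :
    indepList5.Pairwise (fun a b => ¬ (strongProd gilbert gilbert).Adj a b) := by decide

theorem stmt5 : IsIndep (strongProd gilbert gilbert)
    {(![true, true, false, false, false], ![true, true, true, true, true]),
      (![true, false, true, false, false], ![true, true, false, false, false]),
      (![false, true, true, false, false], ![false, false, true, true, false]),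
      (![true, true, true, false, false], ![false, false, false, false, true]),
      (![true, false, false, true, false], ![false, false, true, false, true]),
      (![false, true, false, true, false], ![true, false, false, false, false]),
      (![true, true, false, true, false], ![false, true, false, true, false]),
      (![false, false, true, true, false], ![false, true, false, true, true]),
      (![true, false, true, true, false], ![true, false, true, true, false]),
      (![false, true, true, true, false], ![true, true, true, false, true]),
      (![true, false, false, false, true], ![false, false, false, true, false]),
      (![false, true, false, false, true], ![false, true, false, false, true]),
      (![true, true, false, false, true], ![true, false, true, false, false]),
      (![false, false, true, false, true], ![true, false, true, false, true]),
      (![true, false, true, false, true], ![false, true, true, true, true]),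
      (![false, true, true, false, true], ![true, true, false, true, false]),
      (![false, false, false, true, true], ![true, true, true, true, false]),
      (![true, false, false, true, true], ![true, true, false, false, true]),
      (![false, true, false, true, true], ![false, false, true, true, true]),
      (![false, false, true, true, true], ![false, false, false, false, false])} := by
  intro a ha b hb hne
  have hsymm : Symmetric (fun a b => ¬ (strongProd gilbert gilbert).Adj a b) :=
    fun x y h hadj => h ((strongProd gilbert gilbert).adj_symm hadj)
  haveI : Std.Symm (fun a b => ¬ (strongProd gilbert gilbert).Adj a b) := ⟨fun x y h => hsymm h⟩
  refine indepList5_pairwise.forall ?_ ?_ hne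
  · simpa only [indepList5, List.mem_cons, List.not_mem_nil, or_false, Set.mem_insert_iff, Set.mem_singleton_iff] using ha
  · simpa only [indepList5, List.mem_cons, List.not_mem_nil, or_false, Set.mem_insert_iff, Set.mem_singleton_iff] using hb
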